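/- Let x' = 1^k · x · 0^k. If x' contains a substring of balance k+1 that lies entirely within positions i to j with j < k+n, then x itself contains a substring of balance k+1. -/
import Mathlib


/-- Balance of a binary word: number of 0s (false) minus number of 1s (true). -/
def bal (s : List Bool) : ℤ := (s.count false : ℤ) - (s.count true : ℤ)

/-- The substring x[i..j] (inclusive, 0-indexed). -/
def sub (x : List Bool) (i j : ℕ) : List Bool := (x.drop i).take (j + 1 - i)

/-- x is a Dyck word of depth at most k: every prefix has balance in [0,k] and total balance 0. -/
def DyckBounded (x : List Bool) (k : ℕ) : Prop :=
  (∀ p, p <+: x → 0 ≤ bal p ∧ bal p ≤ (k : ℤ)) ∧ bal x = 0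

lemma bal_nil : bal [] = 0 := rfl

lemma bal_cons (a : Bool) (s : List Bool) :
    bal (a :: s) = bal s + (if a then -1 else 1) := by
  cases a <;> simp [bal, List.count_cons] <;> ring

lemma bal_append (a b : List Bool) : bal (a ++ b) = bal a + bal b := by
  simp [bal]; ring

lemma bal_replicate_true (k : ℕ) : bal (List.replicate k true) = -(k : ℤ) := by
  simp [bal, List.count_replicate]

lemma exists_prefix_bal (s : List Bool) (c : ℤ) (h0 : 0 ≤ c) (h1 : c ≤ bal s) :
    ∃ p, p <+: s ∧ bal p = c := by
  induction s generalizing c with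
  | nil =>
    refine ⟨[], List.prefix_rfl, ?_⟩
    rw [bal_nil] at h1 ⊢; omega
  | cons a s ih =>
    rcases eq_or_lt_of_le h0 with rfl | hc
    · exact ⟨[], List.nil_prefix, bal_nil⟩
    · rw [bal_cons] at h1
      cases a
      · simp at h1
        obtain ⟨p, hp, hb⟩ := ih (c - 1) (by omega) (by omega)
        exact ⟨false :: p, List.cons_prefix_cons.mpr ⟨rfl, hp⟩,
          by rw [bal_cons, hb]; simp⟩
      · simp at h1
        obtain ⟨p, hp, hb⟩ := ih (c + 1) (by omega) (by omega)
        exact ⟨true :: p, List.cons_prefix_cons.mpr ⟨rfl, hp⟩,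
          by rw [bal_cons, hb]; simp⟩

/-- If x' = 1^k x 0^k has a substring of balance k+1 lying within positions i..j with
j < k+n, then x itself contains a substring of balance k+1. -/
theorem plus_substring_transfers (x : List Bool) (n k : ℕ) (hn : x.length = n)
    (i j : ℕ) (hij : i ≤ j) (hj : j < k + n)
    (hbal : bal (sub (List.replicate k true ++ x ++ List.replicate k false) i j)
      = (k : ℤ) + 1) :
    ∃ s, s <:+: x ∧ bal s = (k : ℤ) + 1 := by
  -- first: the substring only involves the first k+n characters
  set u := List.replicate k true
  set w := List.replicate k false
  have hlen : (u ++ x).length = k + n := by simp [u, hn]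
  have hsub : sub (u ++ x ++ w) i j = sub (u ++ x) i j := by
    have h1 : u ++ x ++ w = (u ++ x) ++ w := by simp [List.append_assoc]
    rw [h1]
    unfold sub
    rw [List.drop_append, List.take_append]
    have hi : i ≤ k + n := by omega
    have : ((u ++ x).drop i).length = k + n - i := by simp [hlen]
    have hji : j + 1 - i ≤ k + n - i := by omega
    rw [hlen]
    have : (j + 1 - i) - ((u ++ x).drop i).length = 0 := by
      simp [hlen]; omega
    rw [this]
    simp [Nat.sub_eq_zero_of_le hi]
  rw [hsub] at hbal
  by_cases hik : k ≤ i
  · -- substring entirely within x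
    refine ⟨sub (u ++ x) i j, ?_, hbal⟩
    have hdrop : (u ++ x).drop i = x.drop (i - k) := by
      rw [List.drop_append]
      have : u.length = k := by simp [u]
      rw [this, List.drop_eq_nil_of_le (by simp [u]; omega)]
      simp
    unfold sub
    rw [hdrop]
    exact (List.take_prefix _ _).isInfix.trans (List.drop_suffix _ _).isInfix
  · push_neg at hik
    -- substring = 1^(k-i) ++ prefix of x
    have hdrop : (u ++ x).drop i = List.replicate (k - i) true ++ x := by
      rw [List.drop_append]
      have h1 : u.drop i = List.replicate (k - i) true := by
        simp [u, List.drop_replicate]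
      have h2 : i - u.length = 0 := by simp [u]; omega
      rw [h1, h2, List.drop_zero]
    have hw : sub (u ++ x) i j
        = List.replicate (min (j + 1 - i) (k - i)) true ++ x.take (j + 1 - i - (k - i)) := by
      unfold sub
      rw [hdrop, List.take_append, List.take_replicate,
        List.length_replicate]
    by_cases hjk : j + 1 ≤ k
    · -- then the substring is all ones: negative balance, contradiction
      exfalso
      have hmin : min (j + 1 - i) (k - i) = j + 1 - i := by omega
      have hz : j + 1 - i - (k - i) = 0 := by omega
      rw [hw, hmin, hz] at hbal
      simp [bal_append, bal_replicate_true, bal_nil] at hbal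
      omega
    · push_neg at hjk
      have hmin : min (j + 1 - i) (k - i) = k - i := by omega
      have harg : j + 1 - i - (k - i) = j + 1 - k := by omega
      rw [hw, hmin, harg, bal_append, bal_replicate_true] at hbal
      have hki : ((k : ℤ) - i) = ((k - i : ℕ) : ℤ) := by
        omega
      have hb : (k : ℤ) + 1 ≤ bal (x.take (j + 1 - k)) := by
        rw [← hki] at hbal; omega
      obtain ⟨p, hp, hbp⟩ := exists_prefix_bal (x.take (j + 1 - k)) ((k : ℤ) + 1)
        (by positivity) hb
      exact ⟨p, (hp.trans (List.take_prefix _ _)).isInfix, hbp⟩
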